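/- Assume 𝒢 is connected. If (λ, f) is an eigenpair of ℋ_p with f(u) > 0 for every u ∈ V, then λ = (Σ_{u∈V} κ_u f(u)^{p−1})/(Σ_{u∈V} ϱ_u f(u)^{p−1}); in particular min_{u∈V} κ_u/ϱ_u ≤ λ ≤ max_{u∈V} κ_u/ϱ_u. Consequently, the first variational eigenvalue λ₁ = min_{g ∈ 𝒮_p} ℛ(g) satisfies min_{u∈V} κ_u/ϱ_u ≤ λ₁ ≤ max_{u∈V} κ_u/ϱ_u. -/

import Mathlib

noncomputable section

open Finset

/-- `φ_p(x) = |x|^{p-2} x` (real exponent, `φ_p(0) = 0`). -/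
def phiP (p x : ℝ) : ℝ := |x| ^ (p - 2) * x

/-- The generalized `p`-Laplacian `ℋ_p`.  The edge-weight function `ω` is assumed to be
symmetric and to vanish on pairs of non-adjacent vertices, so the sum over all vertices
is the sum over the neighbours of `u`. -/
def genLap {V : Type*} [Fintype V] (ω : V → V → ℝ) (κ : V → ℝ) (p : ℝ)
    (f : V → ℝ) (u : V) : ℝ :=
  (∑ v : V, ω u v * phiP p (f u - f v)) + κ u * phiP p (f u)

/-- `(lam, f)` is an eigenpair of `ℋ_p`. -/
def IsEigenpair {V : Type*} [Fintype V] (ω : V → V → ℝ) (κ ϱ : V → ℝ) (p lam : ℝ)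
    (f : V → ℝ) : Prop :=
  f ≠ 0 ∧ ∀ u, genLap ω κ p f u = lam * (ϱ u * phiP p (f u))

/-- The Rayleigh quotient `ℛ` of `ℋ_p` (each edge `uv` is counted once: the double sum
counts it twice, whence the factor `1/2`). -/
def rayleigh {V : Type*} [Fintype V] (ω : V → V → ℝ) (κ ϱ : V → ℝ) (p : ℝ)
    (f : V → ℝ) : ℝ :=
  ((1 / 2) * ∑ u : V, ∑ v : V, ω u v * |f u - f v| ^ p + ∑ u : V, κ u * |f u| ^ p) /
    ∑ u : V, ϱ u * |f u| ^ p

/-- The `p`-sphere `𝒮_p`. -/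
def pSphere (V : Type*) [Fintype V] (p : ℝ) : Set (V → ℝ) := {f | ∑ u : V, |f u| ^ p = 1}

/-- The Krasnoselskii genus of a (symmetric) subset of `ℝ^V`. -/
def krasGenus {V : Type*} [Fintype V] (A : Set (V → ℝ)) : ℕ∞ :=
  sInf {n : ℕ∞ | ∃ k : ℕ, n = (k : ℕ∞) ∧ ∃ φ : (V → ℝ) → (Fin k → ℝ),
    ContinuousOn φ A ∧ (∀ x ∈ A, φ (-x) = -φ x) ∧ ∀ x ∈ A, φ x ≠ 0}

/-- The `k`-th variational eigenvalue of `ℋ_p`: the min over closed symmetric subsets of the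
`p`-sphere of genus at least `k` of the max of the Rayleigh quotient. -/
def varEig {V : Type*} [Fintype V] (ω : V → V → ℝ) (κ ϱ : V → ℝ) (p : ℝ) (k : ℕ) : ℝ :=
  sInf {r : ℝ | ∃ A : Set (V → ℝ), A ⊆ pSphere V p ∧ IsClosed A ∧ (∀ f ∈ A, -f ∈ A) ∧
    (k : ℕ∞) ≤ krasGenus A ∧ IsGreatest (rayleigh ω κ ϱ p '' A) r}

/-- The subgraph `𝒢₊(f)`: vertices where `f ≠ 0`, edges where `f` has equal nonzero signs. -/
def posGraph {V : Type*} (G : SimpleGraph V) (f : V → ℝ) : SimpleGraph V where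
  Adj u v := G.Adj u v ∧ 0 < f u * f v
  symm := by
    refine ⟨?_⟩
    intro u v h
    exact ⟨h.1.symm, by rw [mul_comm]; exact h.2⟩
  loopless := ⟨fun u h => G.loopless.irrefl u h.1⟩

/-- The number `ν(f)` of (strong) nodal domains of `f`: the number of connected components of
`𝒢₊(f)` consisting of vertices where `f` is nonzero. -/
def nodalCount {V : Type*} (G : SimpleGraph V) (f : V → ℝ) : ℕ :=
  {c : (posGraph G f).ConnectedComponent |
    ∀ u, (posGraph G f).connectedComponentMk u = c → f u ≠ 0}.ncard

/-- The subgraph of edges on which `f` changes sign. -/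
def negGraph {V : Type*} (G : SimpleGraph V) (f : V → ℝ) : SimpleGraph V where
  Adj u v := G.Adj u v ∧ f u * f v < 0
  symm := by
    refine ⟨?_⟩
    intro u v h
    exact ⟨h.1.symm, by rw [mul_comm]; exact h.2⟩
  loopless := ⟨fun u h => G.loopless.irrefl u h.1⟩

/-- `ζ(f)`: the number of edges on which `f` changes sign. -/
def zetaCount {V : Type*} [Fintype V] (G : SimpleGraph V) (f : V → ℝ) : ℕ :=
  (negGraph G f).edgeSet.ncard

/-- `z(f)`: the number of vertices where `f` vanishes. -/
def zeroCount {V : Type*} [Fintype V] (f : V → ℝ) : ℕ := {u : V | f u = 0}.ncard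

/-- `l(f)`: the number of independent loops (cycle rank) of `𝒢₊(f)`,
`|E(𝒢₊(f))| − |V(𝒢₊(f))| + ν(f)`. -/
def loopCount {V : Type*} [Fintype V] (G : SimpleGraph V) (f : V → ℝ) : ℤ :=
  ((posGraph G f).edgeSet.ncard : ℤ) - ({u : V | f u ≠ 0}.ncard : ℤ) + (nodalCount G f : ℤ)

/-- The subgraph `𝒢'(f)` of `𝒢` induced on the support of `f` (vertices with `f = 0` are
deleted together with all incident edges; in this encoding they are kept as isolated
vertices, which are discarded in the counts below). -/
def suppGraph {V : Type*} (G : SimpleGraph V) (f : V → ℝ) : SimpleGraph V where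
  Adj u v := G.Adj u v ∧ f u ≠ 0 ∧ f v ≠ 0
  symm := by
    refine ⟨?_⟩
    intro u v h
    exact ⟨h.1.symm, h.2.2, h.2.1⟩
  loopless := ⟨fun u h => G.loopless.irrefl u h.1⟩

/-- `c(f)`: the number of connected components of `𝒢'(f)`. -/
def compCount {V : Type*} (G : SimpleGraph V) (f : V → ℝ) : ℕ :=
  {c : (suppGraph G f).ConnectedComponent |
    ∀ u, (suppGraph G f).connectedComponentMk u = c → f u ≠ 0}.ncard

/-- `β'(f)`: the number of independent loops of `𝒢'(f)`,
`|E(𝒢'(f))| − |V(𝒢'(f))| + c(f)`. -/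
def betaSupp {V : Type*} [Fintype V] (G : SimpleGraph V) (f : V → ℝ) : ℤ :=
  ((suppGraph G f).edgeSet.ncard : ℤ) - ({u : V | f u ≠ 0}.ncard : ℤ) + (compCount G f : ℤ)

lemma phiP_of_pos (p : ℝ) {x : ℝ} (hx : 0 < x) : phiP p x = x ^ (p - 1) := by
  unfold phiP
  rw [abs_of_pos hx, show p - 1 = (p - 2) + 1 by ring, Real.rpow_add_one hx.ne']

lemma antisymSum {V : Type*} [Fintype V] (ω : V → V → ℝ) (p : ℝ) (f : V → ℝ)
    (hωsymm : ∀ u v, ω u v = ω v u) :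
    ∑ u : V, ∑ v : V, ω u v * phiP p (f u - f v) = 0 := by
  have key : ∀ u v, ω v u * phiP p (f v - f u) = -(ω u v * phiP p (f u - f v)) := by
    intro u v
    rw [hωsymm v u, show f v - f u = -(f u - f v) by ring]
    unfold phiP; rw [abs_neg]; ring
  set S := ∑ u : V, ∑ v : V, ω u v * phiP p (f u - f v) with hS
  have h : S = -S := by
    calc S = ∑ v : V, ∑ u : V, ω u v * phiP p (f u - f v) := Finset.sum_comm
    _ = ∑ u : V, ∑ v : V, ω v u * phiP p (f v - f u) := rfl
    _ = ∑ u : V, ∑ v : V, -(ω u v * phiP p (f u - f v)) :=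
      Finset.sum_congr rfl fun u _ => Finset.sum_congr rfl fun v _ => key u v
    _ = -S := by rw [hS]; simp
  linarith

/-- characterization and bounds for an eigenvalue with positive eigenfunction,
and the resulting bounds for the first variational eigenvalue `λ₁ = min_{g ∈ 𝒮_p} ℛ(g)`. -/
theorem stmt9 {V : Type*} [Fintype V] [Nonempty V]
    (G : SimpleGraph V) (ω : V → V → ℝ) (κ ϱ : V → ℝ) (p : ℝ) (hp : 1 < p)
    (hωsymm : ∀ u v, ω u v = ω v u)
    (hωpos : ∀ u v, G.Adj u v → 0 < ω u v)
    (hωzero : ∀ u v, ¬ G.Adj u v → ω u v = 0)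
    (hϱpos : ∀ u, 0 < ϱ u)
    (hconn : G.Connected)
    (lam1 : ℝ) (hlam1 : IsLeast (rayleigh ω κ ϱ p '' pSphere V p) lam1) :
    (∀ (lam : ℝ) (f : V → ℝ), IsEigenpair ω κ ϱ p lam f → (∀ u, 0 < f u) →
      lam = (∑ u : V, κ u * f u ^ (p - 1)) / (∑ u : V, ϱ u * f u ^ (p - 1)) ∧
      Finset.univ.inf' Finset.univ_nonempty (fun u : V => κ u / ϱ u) ≤ lam ∧
      lam ≤ Finset.univ.sup' Finset.univ_nonempty (fun u : V => κ u / ϱ u)) ∧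
    Finset.univ.inf' Finset.univ_nonempty (fun u : V => κ u / ϱ u) ≤ lam1 ∧
    lam1 ≤ Finset.univ.sup' Finset.univ_nonempty (fun u : V => κ u / ϱ u) := by
  have hp0 : p ≠ 0 := ne_of_gt (by linarith)
  set mn := Finset.univ.inf' Finset.univ_nonempty (fun u : V => κ u / ϱ u) with hmn
  set mx := Finset.univ.sup' Finset.univ_nonempty (fun u : V => κ u / ϱ u) with hmx
  have hmnκ : ∀ u, mn * ϱ u ≤ κ u := fun u =>
    (le_div_iff₀ (hϱpos u)).mp (Finset.inf'_le (fun u : V => κ u / ϱ u) (Finset.mem_univ u))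
  have hmxκ : ∀ u, κ u ≤ mx * ϱ u := fun u =>
    (div_le_iff₀ (hϱpos u)).mp (Finset.le_sup' (fun u : V => κ u / ϱ u) (Finset.mem_univ u))
  have hωnn : ∀ u v, 0 ≤ ω u v := by
    intro u v
    by_cases h : G.Adj u v
    · exact (hωpos u v h).le
    · exact (hωzero u v h).ge
  constructor
  · intro lam f hef hfpos
    have h1 : ∑ u, genLap ω κ p f u = ∑ u, lam * (ϱ u * phiP p (f u)) :=
      Finset.sum_congr rfl fun u _ => hef.2 u
    unfold genLap at h1
    rw [Finset.sum_add_distrib, antisymSum ω p f hωsymm, zero_add, ← Finset.mul_sum] at h1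
    have e1 : ∑ u : V, κ u * phiP p (f u) = ∑ u : V, κ u * f u ^ (p - 1) :=
      Finset.sum_congr rfl fun u _ => by rw [phiP_of_pos p (hfpos u)]
    have e2 : ∑ u : V, ϱ u * phiP p (f u) = ∑ u : V, ϱ u * f u ^ (p - 1) :=
      Finset.sum_congr rfl fun u _ => by rw [phiP_of_pos p (hfpos u)]
    rw [e1, e2] at h1
    have hden : 0 < ∑ u : V, ϱ u * f u ^ (p - 1) :=
      Finset.sum_pos (fun u _ => mul_pos (hϱpos u) (Real.rpow_pos_of_pos (hfpos u) _))
        Finset.univ_nonempty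
    refine ⟨(eq_div_iff hden.ne').mpr h1.symm, ?_, ?_⟩
    · have hnum : mn * ∑ u : V, ϱ u * f u ^ (p - 1) ≤ ∑ u : V, κ u * f u ^ (p - 1) := by
        rw [Finset.mul_sum]
        refine Finset.sum_le_sum fun u _ => ?_
        have ht : (0:ℝ) ≤ f u ^ (p - 1) := (Real.rpow_pos_of_pos (hfpos u) _).le
        calc mn * (ϱ u * f u ^ (p - 1)) = (mn * ϱ u) * f u ^ (p - 1) := by ring
          _ ≤ κ u * f u ^ (p - 1) := mul_le_mul_of_nonneg_right (hmnκ u) ht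
      rw [h1] at hnum
      exact le_of_mul_le_mul_right hnum hden
    · have hnum : ∑ u : V, κ u * f u ^ (p - 1) ≤ mx * ∑ u : V, ϱ u * f u ^ (p - 1) := by
        rw [Finset.mul_sum]
        refine Finset.sum_le_sum fun u _ => ?_
        have ht : (0:ℝ) ≤ f u ^ (p - 1) := (Real.rpow_pos_of_pos (hfpos u) _).le
        calc κ u * f u ^ (p - 1) ≤ (mx * ϱ u) * f u ^ (p - 1) :=
              mul_le_mul_of_nonneg_right (hmxκ u) ht
          _ = mx * (ϱ u * f u ^ (p - 1)) := by ring
      rw [h1] at hnum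
      exact le_of_mul_le_mul_right hnum hden
  · obtain ⟨⟨g, hgS, hgR⟩, hlb⟩ := hlam1
    constructor
    · -- lower bound via the minimizer g
      have hgone : ∑ u : V, |g u| ^ p = 1 := hgS
      have hgne : ∃ u, g u ≠ 0 := by
        by_contra h
        push_neg at h
        rw [Finset.sum_congr rfl (fun u _ => by
          rw [h u, abs_zero, Real.zero_rpow hp0])] at hgone
        simp at hgone
      obtain ⟨u0, hu0⟩ := hgne
      have hD : 0 < ∑ u : V, ϱ u * |g u| ^ p := by
        refine Finset.sum_pos' (fun u _ => mul_nonneg (hϱpos u).le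
          (Real.rpow_nonneg (abs_nonneg _) _)) ⟨u0, Finset.mem_univ u0, ?_⟩
        exact mul_pos (hϱpos u0) (Real.rpow_pos_of_pos (abs_pos.mpr hu0) _)
      have hA : 0 ≤ ∑ u : V, ∑ v : V, ω u v * |g u - g v| ^ p :=
        Finset.sum_nonneg fun u _ => Finset.sum_nonneg fun v _ =>
          mul_nonneg (hωnn u v) (Real.rpow_nonneg (abs_nonneg _) _)
      have hB : mn * ∑ u : V, ϱ u * |g u| ^ p ≤ ∑ u : V, κ u * |g u| ^ p := by
        rw [Finset.mul_sum]
        refine Finset.sum_le_sum fun u _ => ?_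
        have ht : (0:ℝ) ≤ |g u| ^ p := Real.rpow_nonneg (abs_nonneg _) _
        calc mn * (ϱ u * |g u| ^ p) = (mn * ϱ u) * |g u| ^ p := by ring
          _ ≤ κ u * |g u| ^ p := mul_le_mul_of_nonneg_right (hmnκ u) ht
      rw [← hgR]
      unfold rayleigh
      rw [le_div_iff₀ hD]
      linarith
    · -- upper bound via the constant function
      set n := Fintype.card V with hn
      have hnpos : 0 < n := Fintype.card_pos
      set t : ℝ := ((n : ℝ))⁻¹ with htdef
      have ht : 0 < t := by positivity
      set c : ℝ := t ^ (1/p : ℝ) with hcdef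
      have hc : 0 < c := Real.rpow_pos_of_pos ht _
      have hcp : c ^ p = t := by
        rw [hcdef, ← Real.rpow_mul ht.le, one_div_mul_cancel hp0, Real.rpow_one]
      have habs : |c| ^ p = t := by rw [abs_of_pos hc, hcp]
      have hmem : (fun _ : V => c) ∈ pSphere V p := by
        show ∑ _u : V, |c| ^ p = 1
        rw [Finset.sum_const, Finset.card_univ, habs, nsmul_eq_mul, ← hn]
        exact mul_inv_cancel₀ (Nat.cast_ne_zero.mpr hnpos.ne')
      have hle := hlb ⟨_, hmem, rfl⟩
      have hRc : rayleigh ω κ ϱ p (fun _ : V => c) ≤ mx := by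
        unfold rayleigh
        have hzero : ∑ u : V, ∑ v : V, ω u v * |c - c| ^ p = 0 := by
          simp [Real.zero_rpow hp0]
        rw [hzero, mul_zero, zero_add]
        have hD' : 0 < ∑ _u : V, ϱ _u * |c| ^ p := by
          refine Finset.sum_pos (fun u _ => mul_pos (hϱpos u) ?_) Finset.univ_nonempty
          rw [habs]; exact ht
        rw [div_le_iff₀ hD', Finset.mul_sum]
        refine Finset.sum_le_sum fun u _ => ?_
        have htn : (0:ℝ) ≤ |c| ^ p := Real.rpow_nonneg (abs_nonneg _) _
        calc κ u * |c| ^ p ≤ (mx * ϱ u) * |c| ^ p := mul_le_mul_of_nonneg_right (hmxκ u) htn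
          _ = mx * (ϱ u * |c| ^ p) := by ring
      linarith
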